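/- For all positive integers m and k, every W[2]-parameterized Resolution refutation of (Θ_{m,k}, k) has size at least m^{k+1}. (Observation 1.) -/

import Mathlib

/-- A clause is a finite set of literals; a literal is a pair (variable, polarity). -/
abbrev Clause (V : Type) := Finset (V × Bool)

/-- An assignment satisfies a clause if it makes some literal of the clause true. -/
def satClause {V : Type} (α : V → Bool) (C : Clause V) : Prop :=
  ∃ l ∈ C, α l.1 = l.2

/-- An assignment satisfies a CNF (a set of clauses) if it satisfies every clause. -/
def satCNF {V : Type} (α : V → Bool) (F : Set (Clause V)) : Prop :=
  ∀ C ∈ F, satClause α C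

/-- A Resolution refutation of a set `F` of clauses: a finite sequence of clauses ending in
the empty clause, each clause being an axiom of `F`, a resolvent of two earlier clauses
(from `P ∨ x` and `Q ∨ ¬x` derive `P ∨ Q`), or a weakening of an earlier clause
(from `P` derive `P ∨ l`). Its size is the length of the sequence. -/
structure ResRefutation {V : Type} [DecidableEq V] (F : Set (Clause V)) where
  seq : List (Clause V)
  ne : seq ≠ []
  lastEmpty : seq.getLast ne = (∅ : Clause V)
  valid : ∀ i (hi : i < seq.length),
    (seq[i]'hi ∈ F) ∨
    (∃ (j l : ℕ) (hj : j < i) (hl : l < i) (x : V) (P Q : Clause V),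
      seq[j]'(hj.trans hi) = insert (x, true) P ∧
      seq[l]'(hl.trans hi) = insert (x, false) Q ∧
      seq[i]'hi = P ∪ Q) ∨
    (∃ (j : ℕ) (hj : j < i) (lit : V × Bool),
      seq[i]'hi = insert lit (seq[j]'(hj.trans hi)))

/-- The size of a Resolution refutation: the length of its sequence of clauses. -/
def ResRefutation.size {V : Type} [DecidableEq V] {F : Set (Clause V)}
    (π : ResRefutation F) : ℕ :=
  π.seq.length

/-- Tree-Resolution derivations from the clause set `F`: each clause occurrence is used as a
premise of at most one inference. A tree-Resolution refutation of `F` is a `ResTree F ∅`. -/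
inductive ResTree {V : Type} [DecidableEq V] (F : Set (Clause V)) : Clause V → Type where
  | ax (C : Clause V) (h : C ∈ F) : ResTree F C
  | res (x : V) (P Q : Clause V) (t₁ : ResTree F (insert (x, true) P))
      (t₂ : ResTree F (insert (x, false) Q)) : ResTree F (P ∪ Q)
  | weak (l : V × Bool) (C : Clause V) (t : ResTree F C) : ResTree F (insert l C)

/-- The size of a tree-Resolution derivation: its number of clause occurrences. -/
def ResTree.size {V : Type} [DecidableEq V] {F : Set (Clause V)} :
    ∀ {C : Clause V}, ResTree F C → ℕ
  | _, .ax _ _ => 1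
  | _, .res _ _ _ t₁ t₂ => t₁.size + t₂.size + 1
  | _, .weak _ _ t => t.size + 1

/-- The clauses `¬x_{i₁} ∨ ⋯ ∨ ¬x_{i_{k+1}}` over the variables in `Vars`. -/
def negClausesOn {V : Type} [DecidableEq V] (Vars : Finset V) (k : ℕ) : Set (Clause V) :=
  {C | ∃ S : Finset V, S ⊆ Vars ∧ S.card = k + 1 ∧ C = S.image (fun v => (v, false))}

/-- The clauses `x_{i₁} ∨ ⋯ ∨ x_{i_{n-k+1}}` over the `n` variables in `Vars`. -/
def posClausesOn {V : Type} [DecidableEq V] (Vars : Finset V) (k : ℕ) : Set (Clause V) :=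
  {C | ∃ S : Finset V, S ⊆ Vars ∧ S.card = Vars.card - k + 1 ∧ C = S.image (fun v => (v, true))}

/-- The weight of an assignment: the number of the `n` variables set to true. -/
def weight (n : ℕ) (α : ℕ → Bool) : ℕ :=
  ((Finset.range n).filter (fun i => α i = true)).card
/-- `Θ_{m,k}`: the CNF in the `n = m(k+1)` variables `v^j_i = m*i + j` (`i < k+1`, `j < m`),
with the `k+1` clauses `v^1_i ∨ ⋯ ∨ v^m_i`. -/
def Theta (m k : ℕ) : Set (Clause ℕ) :=
  {C | ∃ i, i < k + 1 ∧ C = (Finset.range m).image (fun j => (m * i + j, true))}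

/-- `Γ_Θ`: the `m^{k+1}` clauses `¬v^{a_1}_1 ∨ ⋯ ∨ ¬v^{a_{k+1}}_{k+1}` with `a_i ∈ [m]`. -/
def GammaTheta (m k : ℕ) : Set (Clause ℕ) :=
  {C | ∃ a : ℕ → ℕ, (∀ i, i < k + 1 → a i < m) ∧
    C = (Finset.range (k + 1)).image (fun i => (m * i + a i, false))}

/-- `Ψ_{n,k}` (for `n` even): the CNF in variables `v_0, …, v_{n-1}` with clauses
`v_{2i} ∨ ¬v_{2i+1}` and `v_{2i+1} ∨ ¬v_{2i}` (i.e. `v_{2i} ↔ v_{2i+1}`). -/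
def Psi (n : ℕ) : Set (Clause ℕ) :=
  {C | ∃ i, 2 * i + 1 < n ∧
    (C = {(2 * i, true), (2 * i + 1, false)} ∨ C = {(2 * i + 1, true), (2 * i, false)})}

/-- `Γ_Ψ` (for `k` odd): the `binom(n/2, (k+1)/2)` clauses
`¬v_{2a_1} ∨ ¬v_{2a_1+1} ∨ ⋯ ∨ ¬v_{2a_{(k+1)/2}} ∨ ¬v_{2a_{(k+1)/2}+1}` over sets `A` of
`(k+1)/2` pairs. -/
def GammaPsi (n k : ℕ) : Set (Clause ℕ) :=
  {C | ∃ A : Finset ℕ, A ⊆ Finset.range (n / 2) ∧ A.card = (k + 1) / 2 ∧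
    C = (A.biUnion (fun a => ({2 * a, 2 * a + 1} : Finset ℕ))).image (fun v => (v, false))}

/-- Observation 1: for all positive integers `m` and `k`, every
`W[2]`-parameterized Resolution refutation of `(Θ_{m,k}, k)` — i.e. every Resolution
refutation of `Θ_{m,k}` together with the clauses `¬x_{i₁} ∨ ⋯ ∨ ¬x_{i_{k+1}}` over its
`n = m(k+1)` variables — has size at least `m^(k+1)`. -/
lemma satClause_mono {V : Type} {α : V → Bool} {C D : Clause V} (h : C ⊆ D)
    (hC : satClause α C) : satClause α D := by
  obtain ⟨l, hl, he⟩ := hC; exact ⟨l, h hl, he⟩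

lemma res_sound {V : Type} [DecidableEq V] {F : Set (Clause V)} (π : ResRefutation F)
    (α : V → Bool) (h : ∀ i (hi : i < π.seq.length), π.seq[i] ∈ F → satClause α (π.seq[i])) :
    ∀ i (hi : i < π.seq.length), satClause α (π.seq[i]) := by
  intro i
  induction i using Nat.strong_induction_on with
  | _ i ih =>
    intro hi
    rcases π.valid i hi with hax | ⟨j, l, hj, hl, x, P, Q, hP, hQ, hE⟩ | ⟨j, hj, lit, hE⟩
    · exact h i hi hax
    · have h1 := ih j hj (hj.trans hi)
      have h2 := ih l hl (hl.trans hi)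
      rw [hP] at h1; rw [hQ] at h2; rw [hE]
      obtain ⟨l1, hl1, he1⟩ := h1
      obtain ⟨l2, hl2, he2⟩ := h2
      rcases Finset.mem_insert.1 hl1 with rfl | hl1
      · rcases Finset.mem_insert.1 hl2 with rfl | hl2
        · simp only at he1 he2; rw [he1] at he2; exact absurd he2 (by simp)
        · exact ⟨l2, Finset.mem_union_right _ hl2, he2⟩
      · exact ⟨l1, Finset.mem_union_left _ hl1, he1⟩
    · rw [hE]
      exact satClause_mono (Finset.subset_insert _ _) (ih j hj (hj.trans hi))

lemma exists_falsified_axiom {V : Type} [DecidableEq V] {F : Set (Clause V)}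
    (π : ResRefutation F) (α : V → Bool) :
    ∃ i, ∃ hi : i < π.seq.length, π.seq[i] ∈ F ∧ ¬ satClause α (π.seq[i]) := by
  by_contra hcon
  push_neg at hcon
  have hlen : 0 < π.seq.length := List.length_pos_iff.2 π.ne
  have hsat := res_sound π α (fun i hi hax => hcon i hi hax) (π.seq.length - 1)
    (Nat.sub_lt hlen one_pos)
  have hlast : π.seq[π.seq.length - 1]'(Nat.sub_lt hlen one_pos) = (∅ : Clause V) := by
    rw [← List.getLast_eq_getElem π.ne]; exact π.lastEmpty
  rw [hlast] at hsat
  obtain ⟨l, hl, _⟩ := hsat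
  exact absurd hl (Finset.notMem_empty l)

theorem theta_W2_lower_bound (m k : ℕ) (hm : 0 < m) (hk : 0 < k)
    (π : ResRefutation (Theta m k ∪ negClausesOn (Finset.range (m * (k + 1))) k)) :
    m ^ (k + 1) ≤ π.size := by
  classical
  -- the candidate true-variable sets
  set T : (Fin (k + 1) → Fin m) → Finset ℕ :=
    fun a => (Finset.univ : Finset (Fin (k + 1))).image (fun i => m * i.1 + (a i).1) with hT
  have hmemT : ∀ (a : Fin (k + 1) → Fin m) (v : ℕ),
      v ∈ T a ↔ ∃ i : Fin (k + 1), m * i.1 + (a i).1 = v := by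
    intro a v; simp [hT]
  have hdiv : ∀ (i : ℕ) (r : ℕ), r < m → (m * i + r) / m = i := by
    intro i r hr
    rw [Nat.mul_add_div hm, Nat.div_eq_of_lt hr, Nat.add_zero]
  have hinj : ∀ (i j r s : ℕ), r < m → s < m → m * i + r = m * j + s → i = j ∧ r = s := by
    intro i j r s hr hs h
    have hij : i = j := by
      have := congrArg (· / m) h
      simpa [hdiv i r hr, hdiv j s hs] using this
    subst hij
    exact ⟨rfl, by omega⟩
  have hcardT : ∀ a, (T a).card = k + 1 := by
    intro a
    rw [hT]
    rw [Finset.card_image_of_injective _ ?_, Finset.card_univ, Fintype.card_fin]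
    intro i j hij
    exact Fin.ext (hinj i.1 j.1 (a i).1 (a j).1 (a i).2 (a j).2 hij).1
  -- the assignments
  set α : (Fin (k + 1) → Fin m) → ℕ → Bool := fun a v => decide (v ∈ T a) with hα
  -- the clauses
  set f : (Fin (k + 1) → Fin m) → Clause ℕ := fun a => (T a).image (fun v => (v, false))
    with hf
  -- each f a occurs in the sequence
  have key : ∀ a, f a ∈ π.seq := by
    intro a
    obtain ⟨i, hi, hax, hfalse⟩ := exists_falsified_axiom π (α a)
    have heq : π.seq[i] = f a := by
      rcases hax with htheta | hneg
      · -- Theta clauses are satisfied by α a : contradiction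
        exfalso
        obtain ⟨j, hj, hC⟩ := htheta
        apply hfalse
        refine ⟨(m * j + (a ⟨j, hj⟩).1, true), ?_, ?_⟩
        · rw [hC]
          exact Finset.mem_image.2 ⟨(a ⟨j, hj⟩).1, Finset.mem_range.2 (a ⟨j, hj⟩).2, rfl⟩
        · simp only [hα, decide_eq_true_iff]
          exact (hmemT a _).2 ⟨⟨j, hj⟩, rfl⟩
      · obtain ⟨S, hSsub, hScard, hC⟩ := hneg
        have hsub : S ⊆ T a := by
          intro v hv
          by_contra hvT
          apply hfalse
          refine ⟨(v, false), ?_, ?_⟩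
          · rw [hC]; exact Finset.mem_image.2 ⟨v, hv, rfl⟩
          · simp [hα, hvT]
        have hST : S = T a :=
          Finset.eq_of_subset_of_card_le hsub (by rw [hcardT a, hScard])
        rw [hC, hST]
    rw [← heq]
    exact List.getElem_mem _
  -- f is injective
  have hfinj : Function.Injective f := by
    intro a b hab
    have hTab : T a = T b := by
      have : Function.Injective (fun v : ℕ => (v, false)) := by
        intro x y hxy; simpa using congrArg Prod.fst hxy
      exact Finset.image_injective this hab
    funext i
    have : m * i.1 + (a i).1 ∈ T b := by
      rw [← hTab]; exact (hmemT a _).2 ⟨i, rfl⟩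
    obtain ⟨j, hj⟩ := (hmemT b _).1 this
    obtain ⟨hij, hab'⟩ := hinj j.1 i.1 (b j).1 (a i).1 (b j).2 (a i).2 hj
    exact Fin.ext (by rw [← hab']; congr 1; exact (Fin.ext hij.symm : i = j) ▸ rfl)
  -- counting
  calc m ^ (k + 1) = Fintype.card (Fin (k + 1) → Fin m) := by
        simp [Fintype.card_fun]
    _ = (Finset.univ : Finset (Fin (k + 1) → Fin m)).card := Finset.card_univ.symm
    _ ≤ π.seq.toFinset.card := Finset.card_le_card_of_injOn f
        (fun a _ => List.mem_toFinset.2 (key a)) (hfinj.injOn)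
    _ ≤ π.seq.length := π.seq.toFinset_card_le
    _ = π.size := rfl
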